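/- For every finite digraph D = (V,E) and every edge temporalisation τ : E → ℕ, there exists an injective edge temporalisation τ' : E → ℕ such that every pair (u,v) with v temporally reachable from u under τ also has v temporally reachable from u under τ'. In particular, the maximum temporal reachability over all temporalisations is attained by an injective one. -/

import Mathlib

/-- A temporal path in a digraph with edge relation `E` and temporalisation `τ`:
a nonempty list of edges of `E`, consecutive (head = next tail), from `u` to `v`,
with strictly increasing times. -/
def IsTemporalPath {V : Type*} (E : V → V → Prop) (τ : V × V → ℕ)
    (u v : V) (p : List (V × V)) : Prop :=
  (∀ e ∈ p, E e.1 e.2) ∧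
  (∃ e ∈ p.head?, e.1 = u) ∧
  (∃ e ∈ p.getLast?, e.2 = v) ∧
  p.Chain' (fun e f => e.2 = f.1) ∧
  p.Chain' (fun e f => τ e < τ f)

/-- `v` is temporally reachable from `u`. -/
def TReach {V : Type*} (E : V → V → Prop) (τ : V × V → ℕ) (u v : V) : Prop :=
  u = v ∨ ∃ p, IsTemporalPath E τ u v p

theorem stmt1 {V : Type*} [Fintype V] (E : V → V → Prop) (τ : V × V → ℕ) :
    ∃ τ' : V × V → ℕ, Set.InjOn τ' {e : V × V | E e.1 e.2} ∧
      (∀ u v : V, TReach E τ u v → TReach E τ' u v) ∧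
      {p : V × V | TReach E τ p.1 p.2}.ncard ≤
        {p : V × V | TReach E τ' p.1 p.2}.ncard := by
  classical
  set n := Fintype.card (V × V) with hn
  set g : V × V → ℕ := fun e => (Fintype.equivFin (V × V) e : ℕ) with hg
  have hglt : ∀ e, g e < n := fun e => (Fintype.equivFin (V × V) e).isLt
  have hginj : Function.Injective g := by
    intro a b h
    exact (Fintype.equivFin (V × V)).injective (Fin.ext h)
  set τ' : V × V → ℕ := fun e => n * τ e + g e with hτ'
  have hmono : ∀ e f : V × V, τ e < τ f → τ' e < τ' f := by
    intro e f h
    calc n * τ e + g e < n * τ e + n := by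
          exact Nat.add_lt_add_left (hglt e) _
      _ = n * (τ e + 1) := by ring
      _ ≤ n * τ f := Nat.mul_le_mul_left _ h
      _ ≤ n * τ f + g f := Nat.le_add_right _ _
  have hinj : Function.Injective τ' := by
    intro a b h
    simp only [hτ'] at h
    have h1 : g a = g b := by
      have := congrArg (· % n) h
      simpa [Nat.add_mul_mod_self_left, Nat.mul_add_mod,
        Nat.mod_eq_of_lt (hglt a), Nat.mod_eq_of_lt (hglt b)] using this
    exact hginj h1
  have hreach : ∀ u v : V, TReach E τ u v → TReach E τ' u v := by
    intro u v h
    rcases h with h | ⟨p, h1, h2, h3, h4, h5⟩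
    · exact Or.inl h
    · exact Or.inr ⟨p, h1, h2, h3, h4, List.IsChain.imp (fun a b hab => hmono a b hab) h5⟩
  refine ⟨τ', hinj.injOn, hreach, ?_⟩
  apply Set.ncard_le_ncard
  · intro p hp; exact hreach p.1 p.2 hp
  · exact Set.toFinite _
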